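/- Define M(u_1,u_2,u_3) = [1 + (u_1-u_2)/(u_1-u_3)]E(s) - [(u_1-u_2)/(u_1-u_3) + (1-s)]K(s) with s = (u_2-u_3)(u_1+ν)/((u_1-u_3)(u_2+ν)). Then λ_2 - λ_3 = 2(u_2-u_3)(u_3+ν)Π(ρ,s) M(u_1,u_2,u_3) / ((u_2+ν)(K(s)-E(s))(E(s)-(1-s)K(s))). -/

import Mathlib

open Real Filter Topology Set

/-- Complete elliptic integral of the first kind (parameter = modulus squared). -/
noncomputable def Kel (s : ℝ) : ℝ :=
  ∫ θ in (0:ℝ)..(π / 2), 1 / Real.sqrt (1 - s * Real.sin θ ^ 2)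

/-- Complete elliptic integral of the second kind (parameter = modulus squared). -/
noncomputable def Eel (s : ℝ) : ℝ :=
  ∫ θ in (0:ℝ)..(π / 2), Real.sqrt (1 - s * Real.sin θ ^ 2)

/-- Complete elliptic integral of the third kind (parameter = modulus squared). -/
noncomputable def Pel (ρ s : ℝ) : ℝ :=
  ∫ θ in (0:ℝ)..(π / 2),
    1 / ((1 - ρ * Real.sin θ ^ 2) * Real.sqrt (1 - s * Real.sin θ ^ 2))

/-- The modulus-squared parameter `s = (u_2-u_3)(u_1+ν)/((u_1-u_3)(u_2+ν))`. -/
noncomputable def sCH (ν u1 u2 u3 : ℝ) : ℝ :=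
  (u2 - u3) * (u1 + ν) / ((u1 - u3) * (u2 + ν))

/-- The parameter `ρ = (u_2-u_3)/(u_2+ν)`. -/
noncomputable def rCH (ν u2 u3 : ℝ) : ℝ := (u2 - u3) / (u2 + ν)

/-- The Whitham speed `λ_1` for the Camassa-Holm equation. -/
noncomputable def lam1 (ν u1 u2 u3 : ℝ) : ℝ :=
  u1 + u2 + u3 + 2 * ν +
    2 * (u1 - u2) * (u3 + ν) * Pel (rCH ν u2 u3) (sCH ν u1 u2 u3)
      / ((u2 + ν) * Eel (sCH ν u1 u2 u3))

/-- The Whitham speed `λ_2` for the Camassa-Holm equation. -/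
noncomputable def lam2 (ν u1 u2 u3 : ℝ) : ℝ :=
  u1 + u2 + u3 + 2 * ν +
    2 * (u3 - u2) * (1 - sCH ν u1 u2 u3) * Pel (rCH ν u2 u3) (sCH ν u1 u2 u3)
      / (Eel (sCH ν u1 u2 u3) - (1 - sCH ν u1 u2 u3) * Kel (sCH ν u1 u2 u3))

/-- The Whitham speed `λ_3` for the Camassa-Holm equation. -/
noncomputable def lam3 (ν u1 u2 u3 : ℝ) : ℝ :=
  u1 + u2 + u3 + 2 * ν +
    2 * (u2 - u3) * (u3 + ν) * Pel (rCH ν u2 u3) (sCH ν u1 u2 u3)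
      / ((u2 + ν) * (Eel (sCH ν u1 u2 u3) - Kel (sCH ν u1 u2 u3)))

/-- The function `M(u_1,u_2,u_3) = [1 + (u_1-u_2)/(u_1-u_3)]E(s) - [(u_1-u_2)/(u_1-u_3) + (1-s)]K(s)`. -/
noncomputable def Mfun (ν u1 u2 u3 : ℝ) : ℝ :=
  (1 + (u1 - u2) / (u1 - u3)) * Eel (sCH ν u1 u2 u3) -
    ((u1 - u2) / (u1 - u3) + (1 - sCH ν u1 u2 u3)) * Kel (sCH ν u1 u2 u3)

section Aux

variable {s : ℝ}

lemma inner_pos (hs1 : s < 1) (hs0 : 0 < s) (θ : ℝ) : 0 < 1 - s * Real.sin θ ^ 2 := by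
  nlinarith [Real.sin_sq_le_one θ, sq_nonneg (Real.sin θ)]

lemma cont_sqrt (hs1 : s < 1) (hs0 : 0 < s) :
    Continuous fun θ : ℝ => Real.sqrt (1 - s * Real.sin θ ^ 2) := by
  fun_prop

lemma cont_inv (hs1 : s < 1) (hs0 : 0 < s) :
    Continuous fun θ : ℝ => 1 / Real.sqrt (1 - s * Real.sin θ ^ 2) := by
  apply Continuous.div continuous_const (cont_sqrt hs1 hs0)
  intro θ
  exact (Real.sqrt_pos.mpr (inner_pos hs1 hs0 θ)).ne'

lemma Kel_sub_Eel_pos (hs1 : s < 1) (hs0 : 0 < s) : 0 < Kel s - Eel s := by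
  rw [Kel, Eel, ← intervalIntegral.integral_sub
    ((cont_inv hs1 hs0).intervalIntegrable _ _) ((cont_sqrt hs1 hs0).intervalIntegrable _ _)]
  apply intervalIntegral.intervalIntegral_pos_of_pos_on
  · exact ((cont_inv hs1 hs0).sub (cont_sqrt hs1 hs0)).intervalIntegrable _ _
  · intro θ hθ
    have h1 : 0 < 1 - s * Real.sin θ ^ 2 := inner_pos hs1 hs0 θ
    have hsin : 0 < Real.sin θ := Real.sin_pos_of_pos_of_lt_pi hθ.1
      (lt_trans hθ.2 (by linarith [Real.pi_pos]))
    have h2 : 1 - s * Real.sin θ ^ 2 < 1 := by nlinarith [mul_pos hs0 (pow_pos hsin 2)]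
    have hsqpos : 0 < Real.sqrt (1 - s * Real.sin θ ^ 2) := Real.sqrt_pos.mpr h1
    have hsq : Real.sqrt (1 - s * Real.sin θ ^ 2) < 1 := by
      calc Real.sqrt (1 - s * Real.sin θ ^ 2) < Real.sqrt 1 := Real.sqrt_lt_sqrt h1.le h2
        _ = 1 := Real.sqrt_one
    have : Real.sqrt (1 - s * Real.sin θ ^ 2) < 1 / Real.sqrt (1 - s * Real.sin θ ^ 2) := by
      rw [lt_div_iff₀ hsqpos]; nlinarith
    linarith
  · positivity

lemma Eel_sub_Kel_pos (hs1 : s < 1) (hs0 : 0 < s) : 0 < Eel s - (1 - s) * Kel s := by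
  have hK : Kel s = ∫ θ in (0:ℝ)..(π / 2), 1 / Real.sqrt (1 - s * Real.sin θ ^ 2) := rfl
  rw [Eel, hK, ← intervalIntegral.integral_const_mul, ← intervalIntegral.integral_sub
    ((cont_sqrt hs1 hs0).intervalIntegrable _ _)
    (((cont_inv hs1 hs0).intervalIntegrable _ _).const_mul (1 - s))]
  apply intervalIntegral.intervalIntegral_pos_of_pos_on
  · exact ((cont_sqrt hs1 hs0).sub (continuous_const.mul (cont_inv hs1 hs0))).intervalIntegrable _ _
  · intro θ hθ
    have h1 : 0 < 1 - s * Real.sin θ ^ 2 := inner_pos hs1 hs0 θ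
    have hcos : 0 < Real.cos θ := Real.cos_pos_of_mem_Ioo
      ⟨by linarith [hθ.1, Real.pi_pos], hθ.2⟩
    have hsqpos : 0 < Real.sqrt (1 - s * Real.sin θ ^ 2) := Real.sqrt_pos.mpr h1
    have hsq : Real.sqrt (1 - s * Real.sin θ ^ 2) ^ 2 = 1 - s * Real.sin θ ^ 2 :=
      Real.sq_sqrt (le_of_lt h1)
    rw [sub_pos, mul_one_div, div_lt_iff₀ hsqpos]
    have hc2 : 1 - s * Real.sin θ ^ 2 = (1 - s) + s * Real.cos θ ^ 2 := by
      have := Real.sin_sq_add_cos_sq θ; nlinarith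
    have hmul : Real.sqrt (1 - s * Real.sin θ ^ 2) * Real.sqrt (1 - s * Real.sin θ ^ 2)
        = (1 - s) + s * Real.cos θ ^ 2 := by rw [← sq, hsq, hc2]
    nlinarith [mul_pos hs0 (pow_pos hcos 2)]
  · positivity

end Aux

lemma sCH_identity (ν u1 u2 u3 : ℝ) (h3 : -ν < u3) (h32 : u3 < u2) (h21 : u2 < u1) :
    (1 - sCH ν u1 u2 u3) * ((u1 - u3) * (u2 + ν)) = (u1 - u2) * (u3 + ν) := by
  have h13 : u1 - u3 ≠ 0 := by linarith
  have h2ν : u2 + ν ≠ 0 := by linarith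
  rw [sCH]
  field_simp
  ring

lemma sCH_mem (ν u1 u2 u3 : ℝ) (h3 : -ν < u3) (h32 : u3 < u2) (h21 : u2 < u1) :
    0 < sCH ν u1 u2 u3 ∧ sCH ν u1 u2 u3 < 1 := by
  have h13 : (0:ℝ) < u1 - u3 := by linarith
  have h2ν : (0:ℝ) < u2 + ν := by linarith
  constructor
  · rw [sCH]; exact div_pos (by nlinarith) (by nlinarith)
  · have hid := sCH_identity ν u1 u2 u3 h3 h32 h21
    nlinarith [mul_pos (show (0:ℝ) < u1 - u2 by linarith) (show (0:ℝ) < u3 + ν by linarith),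
      mul_pos h13 h2ν]

set_option maxHeartbeats 1600000 in
/-- Formula for `λ_2 - λ_3` in terms of `M`:
`λ_2 - λ_3 = 2(u_2-u_3)(u_3+ν)Π(ρ,s) M / ((u_2+ν)(K-E)(E-(1-s)K))`. -/
theorem lam2_sub_lam3_eq (ν u1 u2 u3 : ℝ) (h3 : -ν < u3) (h32 : u3 < u2) (h21 : u2 < u1) :
    lam2 ν u1 u2 u3 - lam3 ν u1 u2 u3 =
      2 * (u2 - u3) * (u3 + ν) * Pel (rCH ν u2 u3) (sCH ν u1 u2 u3) * Mfun ν u1 u2 u3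
        / ((u2 + ν) * (Kel (sCH ν u1 u2 u3) - Eel (sCH ν u1 u2 u3)) *
            (Eel (sCH ν u1 u2 u3) - (1 - sCH ν u1 u2 u3) * Kel (sCH ν u1 u2 u3))) := by
  obtain ⟨hs0, hs1⟩ := sCH_mem ν u1 u2 u3 h3 h32 h21
  have h13 : (0:ℝ) < u1 - u3 := by linarith
  have h2ν : (0:ℝ) < u2 + ν := by linarith
  have hb : (0:ℝ) < u3 + ν := by linarith
  have hKE := Kel_sub_Eel_pos hs1 hs0
  have hEK := Eel_sub_Kel_pos hs1 hs0
  have hid := sCH_identity ν u1 u2 u3 h3 h32 h21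
  rw [lam2, lam3]
  set s := sCH ν u1 u2 u3 with hsdef
  have hM : Mfun ν u1 u2 u3 =
      ((1 - s) * (u2 + ν) * (Eel s - Kel s) + (u3 + ν) * (Eel s - (1 - s) * Kel s))
        / (u3 + ν) := by
    rw [Mfun, ← hsdef]
    field_simp
    linear_combination (Kel s - Eel s) * hid
  have hD1 : Eel s - (1 - s) * Kel s ≠ 0 := ne_of_gt hEK
  have hD2 : Eel s - Kel s ≠ 0 := by intro h; rw [sub_eq_zero] at h; simp [h] at hKE
  have hD2' : Kel s - Eel s ≠ 0 := by intro h; rw [sub_eq_zero] at h; simp [h] at hKE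
  rw [hM]
  field_simp
  ring
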